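/- Let X and Y be two processes on Ω with time set T and values in (E, ℰ), let S be a stopping time of both natural filtrations F^X and F^Y, and suppose X^S = Y^S and Im X = Im Y (as subsets of E^T). Then F^X_S = F^Y_S. -/

import Mathlib

open MeasureTheory Set

variable {Ω E T : Type*}

/-- The natural filtration of a process `X : T → Ω → E`. -/
def natFilt [LinearOrder T] [mE : MeasurableSpace E] (X : T → Ω → E) (t : T) :
    MeasurableSpace Ω :=
  ⨆ s, ⨆ _ : s ≤ t, mE.comap (X s)

/-- The process `X` stopped at the random time `S : Ω → T ∪ {∞}`. -/
def stopped [LinearOrder T] (X : T → Ω → E) (S : Ω → WithTop T) (t : T) (ω : Ω) : E :=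
  X (min t ((S ω).untopD t)) ω

section Aux

variable [LinearOrder T] [mE : MeasurableSpace E]

/-- The natural filtration of the canonical (coordinate) process on path space `T → E`. -/
def pathFilt (t : T) : MeasurableSpace (T → E) :=
  natFilt (fun s (x : T → E) => x s) t

lemma natFilt_eq_comap (X : T → Ω → E) (t : T) :
    natFilt X t
      = MeasurableSpace.comap (fun ω s => X s ω) (pathFilt (E := E) (T := T) t) := by
  unfold pathFilt natFilt
  rw [MeasurableSpace.comap_iSup]
  refine iSup_congr fun s => ?_
  rw [MeasurableSpace.comap_iSup]
  refine iSup_congr fun _ => ?_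
  rw [MeasurableSpace.comap_comp]
  rfl

lemma iSup_natFilt_eq_comap (X : T → Ω → E) :
    (⨆ t, natFilt X t)
      = MeasurableSpace.comap (fun ω s => X s ω) (⨆ t, pathFilt (E := E) (T := T) t) := by
  rw [MeasurableSpace.comap_iSup]
  exact iSup_congr fun t => natFilt_eq_comap X t

lemma measurableSet_natFilt_iff (X : T → Ω → E) (t : T) (U : Set Ω) :
    MeasurableSet[natFilt X t] U ↔
      ∃ B, MeasurableSet[pathFilt (E := E) (T := T) t] B ∧ (fun ω s => X s ω) ⁻¹' B = U := by
  rw [natFilt_eq_comap]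
  exact MeasurableSpace.measurableSet_comap

lemma measurableSet_iSup_natFilt_iff (X : T → Ω → E) (U : Set Ω) :
    MeasurableSet[⨆ t, natFilt X t] U ↔
      ∃ B, MeasurableSet[⨆ t, pathFilt (E := E) (T := T) t] B ∧
        (fun ω s => X s ω) ⁻¹' B = U := by
  rw [iSup_natFilt_eq_comap]
  exact MeasurableSpace.measurableSet_comap

/-- Sets in `pathFilt t` only depend on coordinates `≤ t`. -/
lemma pathFilt_depends {t : T} {B : Set (T → E)}
    (hB : MeasurableSet[pathFilt (E := E) (T := T) t] B) {x y : T → E}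
    (h : ∀ s ≤ t, x s = y s) : x ∈ B ↔ y ∈ B := by
  let m : MeasurableSpace (T → E) :=
    { MeasurableSet' := fun B => ∀ x y : T → E, (∀ s ≤ t, x s = y s) → (x ∈ B ↔ y ∈ B)
      measurableSet_empty := fun x y _ => Iff.rfl
      measurableSet_compl := fun B hB x y hxy => by
        simp only [mem_compl_iff]
        exact not_congr (hB x y hxy)
      measurableSet_iUnion := fun f hf x y hxy => by
        simp only [mem_iUnion]
        exact exists_congr fun i => hf i x y hxy }
  have hle : pathFilt (E := E) (T := T) t ≤ m := by
    refine iSup_le fun s => iSup_le fun hs => ?_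
    intro B hB
    obtain ⟨e, he, rfl⟩ := hB
    intro x y hxy
    simp only [mem_preimage]
    rw [hxy s hs]
  exact hle B hB x y h

lemma key (q : ℕ → T) (hq : ∀ t : T, ∃ n, t ≤ q n)
    (X Y : T → Ω → E) (S : Ω → WithTop T)
    (hSX : ∀ t : T, MeasurableSet[natFilt X t] {ω | S ω ≤ (t : WithTop T)})
    (hSY : ∀ t : T, MeasurableSet[natFilt Y t] {ω | S ω ≤ (t : WithTop T)})
    (hXY : ∀ (s : T) (ω : Ω), (s : WithTop T) ≤ S ω → X s ω = Y s ω)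
    (hIm : ∀ ω : Ω, ∃ ω', ∀ s, X s ω' = Y s ω)
    (A : Set Ω)
    (hAinf : MeasurableSet[⨆ t, natFilt X t] A)
    (hA : ∀ t : T, MeasurableSet[natFilt X t] (A ∩ {ω | S ω ≤ (t : WithTop T)})) :
    MeasurableSet[⨆ t, natFilt Y t] A ∧
      ∀ t : T, MeasurableSet[natFilt Y t] (A ∩ {ω | S ω ≤ (t : WithTop T)}) := by
  -- extract path-space representations
  choose C hCm hCpre using fun t => (measurableSet_natFilt_iff X t _).mp (hSX t)
  choose C' hC'm hC'pre using fun t => (measurableSet_natFilt_iff Y t _).mp (hSY t)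
  choose B hBm hBpre using fun t => (measurableSet_natFilt_iff X t _).mp (hA t)
  obtain ⟨Binf, hBinfm, hBinfpre⟩ := (measurableSet_iSup_natFilt_iff X A).mp hAinf
  -- pointwise membership forms
  have hC : ∀ (u : T) (ω : Ω), (fun s => X s ω) ∈ C u ↔ S ω ≤ (u : WithTop T) := by
    intro u ω
    have h0 := Set.ext_iff.mp (hCpre u) ω
    simpa using h0
  have hC' : ∀ (u : T) (ω : Ω), (fun s => Y s ω) ∈ C' u ↔ S ω ≤ (u : WithTop T) := by
    intro u ω
    have h0 := Set.ext_iff.mp (hC'pre u) ω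
    simpa using h0
  have hBmem : ∀ (u : T) (ω : Ω),
      (fun s => X s ω) ∈ B u ↔ (ω ∈ A ∧ S ω ≤ (u : WithTop T)) := by
    intro u ω
    have h0 := Set.ext_iff.mp (hBpre u) ω
    simpa using h0
  have hBinfmem : ∀ ω : Ω, (fun s => X s ω) ∈ Binf ↔ ω ∈ A := by
    intro ω
    have h0 := Set.ext_iff.mp hBinfpre ω
    simpa using h0
  -- Claim 1 : if the X-path of ω' equals the Y-path of ω then S ω' = S ω
  have claim1 : ∀ ω ω' : Ω, (∀ s, X s ω' = Y s ω) → S ω' = S ω := by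
    intro ω ω' h
    have h1 : ∀ u : T, S ω' ≤ (u : WithTop T) ↔ S ω ≤ (u : WithTop T) := by
      intro u
      constructor
      · intro hu
        by_contra hnot
        have hlt : (u : WithTop T) < S ω := lt_of_not_ge hnot
        have hagree : ∀ s ≤ u, X s ω' = X s ω := by
          intro s hs
          have hsS : (s : WithTop T) ≤ S ω :=
            le_trans (by exact_mod_cast hs) hlt.le
          rw [h s, ← hXY s ω hsS]
        have hmem : (fun s => X s ω) ∈ C u :=
          (pathFilt_depends (hCm u) hagree).mp ((hC u ω').mpr hu)
        exact hnot ((hC u ω).mp hmem)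
      · intro hu
        by_contra hnot
        have hlt : (u : WithTop T) < S ω' := lt_of_not_ge hnot
        have hagree : ∀ s ≤ u, Y s ω' = Y s ω := by
          intro s hs
          have hsS : (s : WithTop T) ≤ S ω' :=
            le_trans (by exact_mod_cast hs) hlt.le
          rw [← hXY s ω' hsS, h s]
        have hmem : (fun s => Y s ω') ∈ C' u :=
          (pathFilt_depends (hC'm u) hagree).mpr ((hC' u ω).mpr hu)
        exact hnot ((hC' u ω').mp hmem)
    apply le_antisymm
    · cases hs : S ω with
      | top => exact le_top
      | coe u => exact (h1 u).mpr hs.le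
    · cases hs : S ω' with
      | top => exact le_top
      | coe u => exact (h1 u).mp hs.le
  -- Claim 2 (Galmarino bridge)
  have claim2 : ∀ ω ω' : Ω, (∀ s, X s ω' = Y s ω) → ∀ r : T,
      S ω = (r : WithTop T) → (ω' ∈ A ↔ ω ∈ A) := by
    intro ω ω' h r hr
    have hS' : S ω' = (r : WithTop T) := (claim1 ω ω' h).trans hr
    have hagree : ∀ s ≤ r, X s ω' = X s ω := by
      intro s hs
      have hsS : (s : WithTop T) ≤ S ω := by
        rw [hr]; exact_mod_cast hs
      rw [h s, ← hXY s ω hsS]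
    have mem1 : (fun s => X s ω') ∈ B r ↔ ω' ∈ A := by
      rw [hBmem r ω']
      exact and_iff_left (le_of_eq hS')
    have mem2 : (fun s => X s ω) ∈ B r ↔ ω ∈ A := by
      rw [hBmem r ω]
      exact and_iff_left (le_of_eq hr)
    rw [← mem1, ← mem2]
    exact pathFilt_depends (hBm r) hagree
  -- Claim 3 : exact representation of `A ∩ {S ≤ t}` through `Y`
  have claim3 : ∀ t : T, A ∩ {ω | S ω ≤ (t : WithTop T)}
      = (fun ω s => Y s ω) ⁻¹' (B t ∩ C t) := by
    intro t
    ext ω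
    simp only [mem_inter_iff, mem_setOf_eq, mem_preimage]
    obtain ⟨ω', hω'⟩ := hIm ω
    have hfun : (fun s => X s ω') = (fun s => Y s ω) := funext hω'
    have hSeq : S ω' = S ω := claim1 ω ω' hω'
    constructor
    · rintro ⟨hAω, hSω⟩
      obtain ⟨r, hr⟩ : ∃ r : T, S ω = (r : WithTop T) := by
        have hne : S ω ≠ ⊤ := by
          intro hh
          rw [hh] at hSω
          exact absurd hSω (by simp)
        obtain ⟨r, hr⟩ := WithTop.ne_top_iff_exists.mp hne
        exact ⟨r, hr.symm⟩
      have hA' : ω' ∈ A := (claim2 ω ω' hω' r hr).mpr hAω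
      have hb : (fun s => X s ω') ∈ B t := (hBmem t ω').mpr ⟨hA', hSeq.trans_le hSω⟩
      have hc : (fun s => X s ω') ∈ C t := (hC t ω').mpr (hSeq.trans_le hSω)
      exact ⟨hfun ▸ hb, hfun ▸ hc⟩
    · rintro ⟨hb, hc⟩
      have hc' : (fun s => X s ω') ∈ C t := hfun ▸ hc
      have hb' : (fun s => X s ω') ∈ B t := hfun ▸ hb
      have hS't : S ω' ≤ (t : WithTop T) := (hC t ω').mp hc'
      have hSt : S ω ≤ (t : WithTop T) := hSeq ▸ hS't
      have hA' : ω' ∈ A := ((hBmem t ω').mp hb').1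
      obtain ⟨r, hr⟩ : ∃ r : T, S ω = (r : WithTop T) := by
        have hne : S ω ≠ ⊤ := by
          intro hh
          rw [hh] at hSt
          exact absurd hSt (by simp)
        obtain ⟨r, hr⟩ := WithTop.ne_top_iff_exists.mp hne
        exact ⟨r, hr.symm⟩
      exact ⟨(claim2 ω ω' hω' r hr).mp hA', hSt⟩
  -- second conjunct
  have part2 : ∀ t : T, MeasurableSet[natFilt Y t] (A ∩ {ω | S ω ≤ (t : WithTop T)}) := by
    intro t
    exact (measurableSet_natFilt_iff Y t _).mpr
      ⟨B t ∩ C t, (hBm t).inter (hCm t), (claim3 t).symm⟩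
  refine ⟨?_, part2⟩
  -- first conjunct : A ∈ F^Y_∞
  have claim4 : A = (fun ω s => Y s ω) ⁻¹'
      ((⋃ n, (B (q n) ∩ C (q n))) ∪ (Binf ∩ ⋂ n, (C' (q n))ᶜ)) := by
    ext ω
    simp only [mem_preimage, mem_union, mem_iUnion, mem_inter_iff, mem_iInter,
      mem_compl_iff]
    constructor
    · intro hAω
      by_cases hfin : ∃ n, S ω ≤ ((q n : T) : WithTop T)
      · obtain ⟨n, hn⟩ := hfin
        left
        refine ⟨n, ?_⟩
        have h0 := Set.ext_iff.mp (claim3 (q n)) ω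
        simpa using h0.mp ⟨hAω, hn⟩
      · right
        push_neg at hfin
        have hTop : S ω = ⊤ := by
          by_contra hh
          obtain ⟨r, hr⟩ := WithTop.ne_top_iff_exists.mp hh
          obtain ⟨n, hn⟩ := hq r
          exact (hfin n).not_ge (by rw [← hr]; exact_mod_cast hn)
        have hfunXY : ∀ s, X s ω = Y s ω := fun s =>
          hXY s ω (by rw [hTop]; exact le_top)
        have hfun : (fun s => X s ω) = (fun s => Y s ω) := funext hfunXY
        refine ⟨hfun ▸ (hBinfmem ω).mpr hAω, fun n hmem => ?_⟩
        exact (hfin n).not_ge ((hC' (q n) ω).mp hmem)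
    · rintro (⟨n, hn⟩ | ⟨hb, hc⟩)
      · have h0 := Set.ext_iff.mp (claim3 (q n)) ω
        exact (h0.mpr (by simpa using hn)).1
      · have hTop : S ω = ⊤ := by
          by_contra hh
          obtain ⟨r, hr⟩ := WithTop.ne_top_iff_exists.mp hh
          obtain ⟨n, hn⟩ := hq r
          exact hc n ((hC' (q n) ω).mpr (by rw [← hr]; exact_mod_cast hn))
        have hfunXY : ∀ s, X s ω = Y s ω := fun s =>
          hXY s ω (by rw [hTop]; exact le_top)
        have hfun : (fun s => X s ω) = (fun s => Y s ω) := funext hfunXY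
        exact (hBinfmem ω).mp (hfun ▸ hb)
  have hle : ∀ u : T, pathFilt (E := E) (T := T) u ≤ ⨆ t, pathFilt (E := E) (T := T) t :=
    fun u => le_iSup _ u
  have hleSet : ∀ (u : T) (s : Set (T → E)), MeasurableSet[pathFilt (E := E) (T := T) u] s →
      MeasurableSet[⨆ t, pathFilt (E := E) (T := T) t] s := fun u s hs => hle u s hs
  refine (measurableSet_iSup_natFilt_iff Y A).mpr
    ⟨_, ?_, (claim4).symm⟩
  refine MeasurableSet.union ?_ ?_
  · exact MeasurableSet.iUnion fun n =>
      (hleSet _ _ (hBm (q n))).inter (hleSet _ _ (hCm (q n)))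
  · exact hBinfm.inter (MeasurableSet.iInter fun n => (hleSet _ _ (hC'm (q n))).compl)

end Aux

/-- **Observational consistency.** If `S` is a stopping time of the natural filtrations of
both `X` and `Y`, the stopped processes agree, and `Im X = Im Y` (as subsets of `E^T`),
then `F^X_S = F^Y_S`. -/
theorem stmt_5 [LinearOrder T] [MeasurableSpace E]
    (hT : Nonempty (T ≃o ℕ) ∨ Nonempty (T ≃o NNReal))
    (X Y : T → Ω → E) (S : Ω → WithTop T)
    (hSX : ∀ t : T, MeasurableSet[natFilt X t] {ω | S ω ≤ (t : WithTop T)})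
    (hSY : ∀ t : T, MeasurableSet[natFilt Y t] {ω | S ω ≤ (t : WithTop T)})
    (hXY : ∀ (t : T) (ω : Ω), stopped X S t ω = stopped Y S t ω)
    (hIm : Set.range (fun ω (t : T) => X t ω) = Set.range (fun ω (t : T) => Y t ω)) :
    ∀ A : Set Ω,
      (MeasurableSet[⨆ t, natFilt X t] A ∧
          ∀ t : T, MeasurableSet[natFilt X t] (A ∩ {ω | S ω ≤ (t : WithTop T)})) ↔
        (MeasurableSet[⨆ t, natFilt Y t] A ∧
          ∀ t : T, MeasurableSet[natFilt Y t] (A ∩ {ω | S ω ≤ (t : WithTop T)})) := by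
  -- a countable cofinal sequence in `T`
  obtain ⟨q, hq⟩ : ∃ q : ℕ → T, ∀ t : T, ∃ n, t ≤ q n := by
    rcases hT with he | he
    · obtain ⟨e⟩ := he
      exact ⟨fun n => e.symm n, fun t => ⟨e t, (e.symm_apply_apply t).ge⟩⟩
    · obtain ⟨e⟩ := he
      refine ⟨fun n => e.symm n, fun t => ⟨⌈(e t : NNReal)⌉₊, ?_⟩⟩
      have h1 : e t ≤ ((⌈(e t : NNReal)⌉₊ : ℕ) : NNReal) := Nat.le_ceil _
      calc t = e.symm (e t) := (e.symm_apply_apply t).symm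
        _ ≤ e.symm _ := e.symm.monotone h1
  -- the stopped-process equality, in pointwise form
  have hXY' : ∀ (s : T) (ω : Ω), (s : WithTop T) ≤ S ω → X s ω = Y s ω := by
    intro s ω hs
    have h := hXY s ω
    unfold stopped at h
    have hmin : min s ((S ω).untopD s) = s := by
      cases hS : S ω with
      | top => simp [hS, WithTop.untopD_top]
      | coe r =>
        rw [hS] at hs
        have : s ≤ r := by exact_mod_cast hs
        simp [hS, WithTop.untopD_coe, this]
    rwa [hmin] at h
  have hXY'' : ∀ (s : T) (ω : Ω), (s : WithTop T) ≤ S ω → Y s ω = X s ω :=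
    fun s ω hs => (hXY' s ω hs).symm
  -- the range equality, in pointwise form
  have hIm1 : ∀ ω : Ω, ∃ ω', ∀ s, X s ω' = Y s ω := by
    intro ω
    have hmem : (fun s : T => Y s ω) ∈ Set.range (fun ω (t : T) => X t ω) := by
      rw [hIm]; exact ⟨ω, rfl⟩
    obtain ⟨ω', hω'⟩ := hmem
    exact ⟨ω', fun s => congrFun hω' s⟩
  have hIm2 : ∀ ω : Ω, ∃ ω', ∀ s, Y s ω' = X s ω := by
    intro ω
    have hmem : (fun s : T => X s ω) ∈ Set.range (fun ω (t : T) => Y t ω) := by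
      rw [← hIm]; exact ⟨ω, rfl⟩
    obtain ⟨ω', hω'⟩ := hmem
    exact ⟨ω', fun s => congrFun hω' s⟩
  intro A
  constructor
  · rintro ⟨h1, h2⟩
    exact key q hq X Y S hSX hSY hXY' hIm1 A h1 h2
  · rintro ⟨h1, h2⟩
    exact key q hq Y X S hSY hSX hXY'' hIm2 A h1 h2
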